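/- The number of Dyck paths of size n with all peaks at odd height equals the Motzkin number m_{n−1}, and the number of Dyck paths of size n with all peaks at even height equals the Riordan number r_n. -/

import Mathlib

/-- A Dyck path of size `n`: a list of booleans (`true` = north step, `false` = east step)
from `(0,0)` to `(n,n)` staying weakly above the diagonal `y = x`. -/
def IsDyckPath (n : ℕ) (w : List Bool) : Prop :=
  w.length = 2 * n ∧ w.count true = n ∧
    ∀ k, (w.take k).count false ≤ (w.take k).count true

/-- The `y`-coordinate of the lattice point reached after `k` steps. -/
def ycoord (w : List Bool) (k : ℕ) : ℕ := (w.take k).count true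

/-- The `x`-coordinate of the lattice point reached after `k` steps. -/
def xcoord (w : List Bool) (k : ℕ) : ℕ := (w.take k).count false

/-- A peak: a north step at position `i` followed by an east step. -/
def IsPeak (w : List Bool) (i : ℕ) : Prop := w[i]? = some true ∧ w[i+1]? = some false

/-- A valley: an east step at position `i` followed by a north step. -/
def IsValley (w : List Bool) (i : ℕ) : Prop := w[i]? = some false ∧ w[i+1]? = some true

/-- Height above the diagonal after `k` steps. -/
def pdepth (w : List Bool) (k : ℕ) : ℤ := (ycoord w k : ℤ) - (xcoord w k : ℤ)

/-- Step `i` (a north step) of `w` is matched with step `j` (an east step):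
the facing east step at the same height (balanced-parentheses matching). -/
def Matches (w : List Bool) (i j : ℕ) : Prop :=
  i < j ∧ w[i]? = some true ∧ w[j]? = some false ∧
    pdepth w (j + 1) = pdepth w i ∧ ∀ k, i < k → k ≤ j → pdepth w i < pdepth w k

/-- The graph on `m` points whose edges are the upper arches and the lower arches;
its connected components are the components of the corresponding meander. -/
def meanderGraph (m : ℕ) (upper lower : ℕ → ℕ → Prop) : SimpleGraph (Fin m) where
  Adj i j := i ≠ j ∧ (upper i.1 j.1 ∨ upper j.1 i.1 ∨ lower i.1 j.1 ∨ lower j.1 i.1)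
  symm := by
    constructor
    intro i j h
    exact ⟨h.1.symm, by tauto⟩
  loopless := by
    constructor
    intro i h
    exact h.1 rfl

/-- The number of components of the meander with the matching of `P` above and the
matching of `Q` below. -/
noncomputable def trajPQ (n : ℕ) (P Q : List Bool) : ℕ :=
  Nat.card (meanderGraph (2 * n) (Matches P) (Matches Q)).ConnectedComponent

/-- The number of components of the meander with the matching of `P` above and the
rainbow matching `i ↦ 2n - 1 - i` below. -/
noncomputable def traj (n : ℕ) (P : List Bool) : ℕ :=
  Nat.card (meanderGraph (2 * n) (Matches P)
    (fun i j => i + j + 1 = 2 * n)).ConnectedComponent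

/-- No peak with even `y`-coordinate and no valley with odd `x`-coordinate. -/
def NoBadCorner (w : List Bool) : Prop :=
  (∀ i, IsPeak w i → Odd (ycoord w (i + 1))) ∧
  (∀ i, IsValley w i → Even (xcoord w (i + 1)))

/-- A bad corner: a peak with even `y`-coordinate or a valley with odd `x`-coordinate. -/
def IsBadCorner (w : List Bool) (i : ℕ) : Prop :=
  (IsPeak w i ∧ Even (ycoord w (i + 1))) ∨ (IsValley w i ∧ Odd (xcoord w (i + 1)))

/-- Interchange the two steps of the corner at positions `i`, `i+1`. -/
def swapCorner (w : List Bool) (i : ℕ) : List Bool :=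
  (w.set i (w.getD (i + 1) true)).set (i + 1) (w.getD i true)

open Classical in
/-- The involution `φ`: swap the two steps of the first bad corner, if any. -/
noncomputable def phiMap (w : List Bool) : List Bool :=
  if h : ∃ i, IsBadCorner w i then swapCorner w (Nat.find h) else w

/-- The number of unit squares between a Dyck path and the diagonal `y = x`. -/
def area (w : List Bool) : ℕ :=
  ((List.range w.length).map fun i =>
    if w.getD i true then 0 else ycoord w i - xcoord w i - 1).sum

/-- The zigzag Dyck path `(NE)^m`. -/
def zigzag (m : ℕ) : List Bool := (List.replicate m [true, false]).flatten

/-- `N^{2a_1} E^{2b_1} ⋯ N^{2a_t} E^{2b_t}` for `ab = [(a_1,b_1),…,(a_t,b_t)]`. -/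
def doubledWord (ab : List (ℕ × ℕ)) : List Bool :=
  (ab.map fun p => List.replicate (2 * p.1) true ++ List.replicate (2 * p.2) false).flatten

/-- `N^{a_1} E^{b_1} ⋯ N^{a_t} E^{b_t}` for `ab = [(a_1,b_1),…,(a_t,b_t)]`. -/
def halfWord (ab : List (ℕ × ℕ)) : List Bool :=
  (ab.map fun p => List.replicate p.1 true ++ List.replicate p.2 false).flatten

/-- All peaks at odd height (`height` = `y - x` at the peak's lattice point). -/
def AllPeaksOdd (w : List Bool) : Prop :=
  ∀ i, IsPeak w i → Odd (ycoord w (i + 1) - xcoord w (i + 1))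

/-- All peaks at even height. -/
def AllPeaksEven (w : List Bool) : Prop :=
  ∀ i, IsPeak w i → Even (ycoord w (i + 1) - xcoord w (i + 1))

/-- Steps of a Motzkin path: up, horizontal, down. -/
inductive MStep | U | H | D
deriving DecidableEq

/-- The total height change along a list of Motzkin steps. -/
def msum (l : List MStep) : ℤ :=
  (l.map fun s => match s with | MStep.U => 1 | MStep.H => 0 | MStep.D => -1).sum

/-- A Motzkin path of length `n`. -/
def IsMotzkin (n : ℕ) (l : List MStep) : Prop :=
  l.length = n ∧ msum l = 0 ∧ ∀ k, 0 ≤ msum (l.take k)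

/-- A Riordan path of length `n`: a Motzkin path with no horizontal step on the `x`-axis. -/
def IsRiordan (n : ℕ) (l : List MStep) : Prop :=
  IsMotzkin n l ∧ ∀ i, l[i]? = some MStep.H → msum (l.take i) ≠ 0

/-- The map `φ_A` from Dyck paths of size `n+1` (all peaks at odd height)
to Motzkin paths of length `n`: `v_j` is read off from steps `p_{2j} p_{2j+1}`. -/
def phiA (n : ℕ) (P : List Bool) : List MStep :=
  (List.range n).map fun j =>
    match P.getD (2 * j + 1) true, P.getD (2 * j + 2) true with
    | true, true => MStep.U
    | false, true => MStep.H
    | _, _ => MStep.D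

/-- The map `φ_B` from Dyck paths of size `n` (all peaks at even height)
to Riordan paths of length `n`: `u_j` is read off from steps `p_{2j-1} p_{2j}`. -/
def phiB (n : ℕ) (P : List Bool) : List MStep :=
  (List.range n).map fun j =>
    match P.getD (2 * j) true, P.getD (2 * j + 1) true with
    | true, true => MStep.U
    | false, true => MStep.H
    | _, _ => MStep.D
namespace OEPCaux

/-- Encoding of a Motzkin step as a pair of Dyck steps. -/
def g : MStep → List Bool
  | MStep.U => [true, true]
  | MStep.H => [false, true]
  | MStep.D => [false, false]

/-- Encoding of a Motzkin path as a Dyck word (pairwise). -/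
def enc (l : List MStep) : List Bool := (l.map g).flatten

@[simp] lemma enc_nil : enc [] = [] := rfl

@[simp] lemma enc_cons (s : MStep) (t : List MStep) : enc (s :: t) = g s ++ enc t := rfl

@[simp] lemma g_length (s : MStep) : (g s).length = 2 := by cases s <;> rfl

@[simp] lemma enc_length (l : List MStep) : (enc l).length = 2 * l.length := by
  induction l with
  | nil => rfl
  | cons s t ih => simp [ih]; omega

def mval : MStep → ℤ
  | MStep.U => 1
  | MStep.H => 0
  | MStep.D => -1

@[simp] lemma msum_nil : msum [] = 0 := rfl

lemma msum_cons (s : MStep) (t : List MStep) : msum (s :: t) = mval s + msum t := by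
  cases s <;> simp [msum, mval]

lemma count_true_enc (l : List MStep) : ((enc l).count true : ℤ) = l.length + msum l := by
  induction l with
  | nil => simp
  | cons s t ih =>
    rw [enc_cons, List.count_append, msum_cons]
    cases s <;> simp [g, mval, List.count_cons] at ih ⊢ <;> push_cast at ih ⊢ <;> omega

lemma count_false_enc (l : List MStep) : ((enc l).count false : ℤ) = l.length - msum l := by
  induction l with
  | nil => simp
  | cons s t ih =>
    rw [enc_cons, List.count_append, msum_cons]
    cases s <;> simp [g, mval, List.count_cons] at ih ⊢ <;> push_cast at ih ⊢ <;> omega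

lemma count_tf (w : List Bool) : w.count true + w.count false = w.length := by
  induction w with
  | nil => rfl
  | cons b t ih => cases b <;> simp [List.count_cons] <;> omega

lemma enc_injective : Function.Injective enc := by
  intro a
  induction a with
  | nil =>
    intro b h
    cases b with
    | nil => rfl
    | cons s t => cases s <;> simp [g] at h
  | cons s t ih =>
    intro b h
    cases b with
    | nil => cases s <;> simp [g] at h
    | cons s' t' =>
      cases s <;> cases s' <;> simp [g] at h <;> rw [ih h]

/-- prefix nonnegativity with initial height `c` -/
def ok (c : ℤ) (w : List Bool) : Prop :=
  ∀ k, 0 ≤ c + ((w.take k).count true : ℤ) - ((w.take k).count false : ℤ)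

lemma ok_nil {c : ℤ} : ok c [] ↔ 0 ≤ c := by
  constructor
  · intro h; simpa using h 0
  · intro h k; simpa using h

lemma ok_cons {c : ℤ} {b : Bool} {w : List Bool} :
    ok c (b :: w) ↔ 0 ≤ c ∧ ok (c + if b then 1 else -1) w := by
  cases b <;>
  · constructor
    · intro h
      refine ⟨by simpa using h 0, fun k => ?_⟩
      have := h (k + 1)
      simp [List.count_cons] at this ⊢
      omega
    · rintro ⟨h0, h⟩ k
      cases k with
      | zero => simpa using h0
      | succ k =>
        have := h k
        simp [List.count_cons] at this ⊢
        omega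

def bal (w : List Bool) : ℤ := (w.count true : ℤ) - w.count false

@[simp] lemma bal_nil : bal [] = 0 := rfl

lemma bal_cons (b : Bool) (w : List Bool) :
    bal (b :: w) = (if b then 1 else -1) + bal w := by
  cases b <;> simp [bal, List.count_cons] <;> push_cast <;> ring

lemma bal_enc (l : List MStep) : bal (enc l) = 2 * msum l := by
  rw [bal, count_true_enc, count_false_enc]; ring

lemma ok_append {a : List Bool} : ∀ {c : ℤ} {b : List Bool},
    ok c (a ++ b) ↔ ok c a ∧ ok (c + bal a) b := by
  induction a with
  | nil =>
    intro c b
    simp only [List.nil_append, bal_nil, add_zero]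
    exact ⟨fun h => ⟨ok_nil.mpr (by simpa using h 0), h⟩, fun h => h.2⟩
  | cons x a ih =>
    intro c b
    have e : c + (if x then (1:ℤ) else -1) + bal a
        = c + ((if x then (1:ℤ) else -1) + bal a) := by ring
    rw [List.cons_append, ok_cons, ih, ok_cons, bal_cons, ← e, and_assoc]

/-- Recursive characterization of `ok c (enc l)`. -/
def Rlist : ℤ → List MStep → Prop
  | c, [] => 0 ≤ c
  | c, MStep.U :: t => 0 ≤ c ∧ 0 ≤ c + 1 ∧ Rlist (c + 1 + 1) t
  | c, MStep.H :: t => 0 ≤ c ∧ 0 ≤ c + -1 ∧ Rlist (c + -1 + 1) t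
  | c, MStep.D :: t => 0 ≤ c ∧ 0 ≤ c + -1 ∧ Rlist (c + -1 + -1) t

lemma ok_enc {l : List MStep} : ∀ {c : ℤ}, ok c (enc l) ↔ Rlist c l := by
  induction l with
  | nil => intro c; simpa [Rlist] using ok_nil
  | cons s t ih =>
    intro c
    cases s
    case U =>
      show ok c (true :: true :: enc t) ↔ Rlist c (MStep.U :: t)
      rw [ok_cons, ok_cons, ih]
      show _ ↔ (0 ≤ c ∧ 0 ≤ c + 1 ∧ Rlist (c + 1 + 1) t)
      norm_num
    case H =>
      show ok c (false :: true :: enc t) ↔ Rlist c (MStep.H :: t)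
      rw [ok_cons, ok_cons, ih]
      show _ ↔ (0 ≤ c ∧ 0 ≤ c + -1 ∧ Rlist (c + -1 + 1) t)
      norm_num
    case D =>
      show ok c (false :: false :: enc t) ↔ Rlist c (MStep.D :: t)
      rw [ok_cons, ok_cons, ih]
      show _ ↔ (0 ≤ c ∧ 0 ≤ c + -1 ∧ Rlist (c + -1 + -1) t)
      norm_num

lemma forall_nat_split {P : ℕ → Prop} : (∀ k, P k) ↔ P 0 ∧ ∀ k, P (k + 1) :=
  ⟨fun h => ⟨h 0, fun k => h _⟩, fun h k => by cases k with
    | zero => exact h.1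
    | succ k => exact h.2 k⟩

lemma Rlist_iff : ∀ (l : List MStep) (c : ℤ), Rlist c l ↔
    (∀ k, 0 ≤ c + 2 * msum (l.take k)) ∧
    (∀ i, l[i]? = some MStep.H → c + 2 * msum (l.take i) ≠ 0) := by
  intro l
  induction l with
  | nil =>
    intro c
    constructor
    · intro h
      exact ⟨fun k => by simp only [Rlist] at h; simpa using h, fun i hi => by simp at hi⟩
    · intro h
      show 0 ≤ c
      simpa using h.1 0
  | cons s t ih =>
    intro c
    rw [forall_nat_split (P := fun k => 0 ≤ c + 2 * msum ((s :: t).take k)),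
        forall_nat_split (P := fun i => (s :: t)[i]? = some MStep.H →
          c + 2 * msum ((s :: t).take i) ≠ 0)]
    simp only [List.take_succ_cons, List.take_zero, List.getElem?_cons_succ,
      List.getElem?_cons_zero, msum_cons, msum_nil]
    cases s
    case U =>
      show (0 ≤ c ∧ 0 ≤ c + 1 ∧ Rlist (c + 1 + 1) t) ↔ _
      rw [ih]
      constructor
      · rintro ⟨h0, -, h1, h2⟩
        refine ⟨⟨by omega, fun k => by have := h1 k; simp [mval] at this ⊢; omega⟩,
          fun h => by simp at h, fun i hi => by have := h2 i hi; simp [mval] at this ⊢; omega⟩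
      · rintro ⟨⟨h0, h1⟩, -, h2⟩
        refine ⟨by omega, by omega, fun k => ?_, fun i hi => ?_⟩
        · have := h1 k; simp [mval] at this; omega
        · have := h2 i hi; simp [mval] at this; omega
    case H =>
      show (0 ≤ c ∧ 0 ≤ c + -1 ∧ Rlist (c + -1 + 1) t) ↔ _
      rw [ih]
      constructor
      · rintro ⟨h0, hm, h1, h2⟩
        refine ⟨⟨by omega, fun k => by have := h1 k; simp [mval] at this ⊢; omega⟩,
          fun _ => by simp; omega, fun i hi => by have := h2 i hi; simp [mval] at this ⊢; omega⟩
      · rintro ⟨⟨h0, h1⟩, hne, h2⟩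
        have hne' : c ≠ 0 := by simpa using hne rfl
        refine ⟨by omega, by omega, fun k => ?_, fun i hi => ?_⟩
        · have := h1 k; simp [mval] at this; omega
        · have := h2 i hi; simp [mval] at this; omega
    case D =>
      show (0 ≤ c ∧ 0 ≤ c + -1 ∧ Rlist (c + -1 + -1) t) ↔ _
      rw [ih]
      constructor
      · rintro ⟨h0, hm, h1, h2⟩
        refine ⟨⟨by omega, fun k => by have := h1 k; simp [mval] at this ⊢; omega⟩,
          fun h => by simp at h, fun i hi => by have := h2 i hi; simp [mval] at this ⊢; omega⟩
      · rintro ⟨⟨h0, h1⟩, -, h2⟩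
        have := h1 0
        simp [mval] at this
        refine ⟨by omega, by omega, fun k => ?_, fun i hi => ?_⟩
        · have := h1 k; simp [mval] at this; omega
        · have := h2 i hi; simp [mval] at this; omega

/-- Decoding a pairwise Dyck word into Motzkin steps. -/
def dec : List Bool → List MStep
  | true :: true :: t => MStep.U :: dec t
  | false :: true :: t => MStep.H :: dec t
  | false :: false :: t => MStep.D :: dec t
  | _ => []

lemma getElem?_lt {α : Type*} {l : List α} {n : ℕ} {a : α} (h : l[n]? = some a) :
    n < l.length := by
  by_contra h'
  rw [List.getElem?_eq_none (by omega)] at h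
  simp at h

lemma enc_dec : ∀ (m : ℕ) (w : List Bool), w.length ≤ m → w.length % 2 = 0 →
    (∀ j, ¬(w[2*j]? = some true ∧ w[2*j+1]? = some false)) →
    enc (dec w) = w := by
  intro m
  induction m with
  | zero =>
    intro w hw _ _
    have : w = [] := List.eq_nil_of_length_eq_zero (by omega)
    subst this; rfl
  | succ m ih =>
    intro w hw he hp
    match w with
    | [] => rfl
    | [b] => simp at he
    | a :: b :: t =>
      have ht : enc (dec t) = t := by
        refine ih t (by simp at hw; omega) (by simp at he ⊢; omega) (fun j => ?_)
        have h := hp (j + 1)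
        have e1 : (a :: b :: t)[2*(j+1)]? = t[2*j]? := by
          rw [show 2*(j+1) = (2*j) + 1 + 1 from by ring, List.getElem?_cons_succ,
            List.getElem?_cons_succ]
        have e2 : (a :: b :: t)[2*(j+1)+1]? = t[2*j+1]? := by
          rw [show 2*(j+1)+1 = (2*j+1) + 1 + 1 from by ring, List.getElem?_cons_succ,
            List.getElem?_cons_succ]
        rw [e1, e2] at h
        exact h
      have h0 := hp 0
      simp only [Nat.mul_zero, Nat.zero_add, List.getElem?_cons_zero,
        List.getElem?_cons_succ, Option.some_inj] at h0
      cases a <;> cases b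
      · show enc (MStep.D :: dec t) = _
        simp [g, ht]
      · show enc (MStep.H :: dec t) = _
        simp [g, ht]
      · exact absurd ⟨rfl, rfl⟩ h0
      · show enc (MStep.U :: dec t) = _
        simp [g, ht]

lemma enc_getElem? : ∀ (l : List MStep) (j : ℕ) (s : MStep), l[j]? = some s →
    (enc l)[2*j]? = (g s)[0]? ∧ (enc l)[2*j+1]? = (g s)[1]? := by
  intro l
  induction l with
  | nil => intro j s h; simp at h
  | cons a t ih =>
    intro j s h
    cases j with
    | zero =>
      simp only [List.getElem?_cons_zero, Option.some_inj] at h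
      subst h
      rw [enc_cons]
      constructor
      · rw [List.getElem?_append_left (by rw [g_length]; omega)]
      · rw [List.getElem?_append_left (by rw [g_length]; omega)]
    | succ j =>
      simp only [List.getElem?_cons_succ] at h
      obtain ⟨h1, h2⟩ := ih j s h
      rw [enc_cons]
      constructor
      · rw [List.getElem?_append_right (by rw [g_length]; omega), g_length,
          show 2*(j+1) - 2 = 2*j from by omega]
        exact h1
      · rw [List.getElem?_append_right (by rw [g_length]; omega), g_length,
          show 2*(j+1)+1 - 2 = 2*j+1 from by omega]
        exact h2

lemma enc_no_peak (l : List MStep) (j : ℕ) :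
    ¬((enc l)[2*j]? = some true ∧ (enc l)[2*j+1]? = some false) := by
  rintro ⟨h1, h2⟩
  have hj : 2*j < (enc l).length := getElem?_lt h1
  have hj' : j < l.length := by rw [enc_length] at hj; omega
  obtain ⟨s, hs⟩ : ∃ s, l[j]? = some s := ⟨l[j], List.getElem?_eq_getElem hj'⟩
  obtain ⟨hg1, hg2⟩ := enc_getElem? l j s hs
  rw [h1] at hg1
  rw [h2] at hg2
  cases s <;> simp [g] at hg1 hg2

lemma ycoord_add_xcoord {w : List Bool} {k : ℕ} (h : k ≤ w.length) :
    ycoord w k + xcoord w k = k := by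
  have h2 := count_tf (w.take k)
  rw [List.length_take] at h2
  unfold ycoord xcoord
  omega

lemma peak_parity {n : ℕ} {w : List Bool} {i : ℕ} (hD : IsDyckPath n w) (hp : IsPeak w i) :
    (Odd (ycoord w (i+1) - xcoord w (i+1)) ↔ i % 2 = 0) ∧
    (Even (ycoord w (i+1) - xcoord w (i+1)) ↔ i % 2 = 1) := by
  have hlt : i + 1 < w.length := getElem?_lt hp.2
  have hs := ycoord_add_xcoord (w := w) (k := i+1) (by omega)
  have hle : xcoord w (i+1) ≤ ycoord w (i+1) := hD.2.2 (i+1)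
  rw [Nat.odd_iff, Nat.even_iff]
  omega

lemma dyck_iff {n : ℕ} {w : List Bool} :
    IsDyckPath n w ↔ w.length = 2*n ∧ w.count true = n ∧ ok 0 w := by
  unfold IsDyckPath
  refine and_congr_right fun _ => and_congr_right fun _ => ?_
  constructor
  · intro h k
    have := h k
    omega
  · intro h k
    have := h k
    omega

def encA (l : List MStep) : List Bool := true :: (enc l ++ [false])

lemma ok_encA {l : List MStep} (h : msum l = 0) : ok 0 (encA l) ↔ Rlist 1 l := by
  unfold encA
  rw [ok_cons, ok_append, bal_enc, h, ok_cons, ok_nil]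
  norm_num
  rw [← ok_enc]

lemma memA {n : ℕ} (hn : 1 ≤ n) {l : List MStep} (h : IsMotzkin (n-1) l) :
    IsDyckPath n (encA l) ∧ AllPeaksOdd (encA l) := by
  obtain ⟨hlen, hsum, hpre⟩ := h
  have hR : Rlist 1 l := by
    rw [Rlist_iff]
    exact ⟨fun k => by have := hpre k; omega, fun i hi => by have := hpre i; omega⟩
  have hD : IsDyckPath n (encA l) := by
    rw [dyck_iff]
    refine ⟨?_, ?_, (ok_encA hsum).mpr hR⟩
    · simp [encA, enc_length, hlen]
      omega
    · have hct : ((enc l).count true : ℤ) = l.length := by rw [count_true_enc, hsum]; ring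
      have h2 : (encA l).count true = (enc l).count true + 1 := by
        simp [encA, List.count_cons, List.count_append]
      omega
  refine ⟨hD, fun i hp => ?_⟩
  rw [(peak_parity hD hp).1]
  by_contra hodd
  obtain ⟨j, rfl⟩ : ∃ j, i = 2*j+1 := ⟨i/2, by omega⟩
  obtain ⟨hp1, hp2⟩ := hp
  unfold encA at hp1 hp2
  rw [List.getElem?_cons_succ] at hp1
  rw [show (2*j+1+1 : ℕ) = (2*j+1)+1 from rfl, List.getElem?_cons_succ] at hp2
  have hlt : 2*j+1 < (enc l ++ [false]).length := getElem?_lt hp2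
  rw [List.length_append, enc_length] at hlt
  simp only [List.length_cons, List.length_nil] at hlt
  have hj : 2*j+1 < (enc l).length := by rw [enc_length]; omega
  rw [List.getElem?_append_left (by rw [enc_length] at hj ⊢; omega)] at hp1
  rw [List.getElem?_append_left hj] at hp2
  exact enc_no_peak l j ⟨hp1, hp2⟩

lemma memB {n : ℕ} {l : List MStep} (h : IsRiordan n l) :
    IsDyckPath n (enc l) ∧ AllPeaksEven (enc l) := by
  obtain ⟨⟨hlen, hsum, hpre⟩, hH⟩ := h
  have hR : Rlist 0 l := by
    rw [Rlist_iff]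
    exact ⟨fun k => by have := hpre k; omega, fun i hi => by have := hH i hi; omega⟩
  have hD : IsDyckPath n (enc l) := by
    rw [dyck_iff]
    refine ⟨by rw [enc_length, hlen], ?_, ok_enc.mpr hR⟩
    have hct := count_true_enc l
    rw [hsum, hlen] at hct
    omega
  refine ⟨hD, fun i hp => ?_⟩
  rw [(peak_parity hD hp).2]
  by_contra h2
  obtain ⟨j, rfl⟩ : ∃ j, i = 2*j := ⟨i/2, by omega⟩
  exact enc_no_peak l j ⟨hp.1, hp.2⟩

lemma shapeA {n : ℕ} {w : List Bool} (hn : 1 ≤ n) (hD : IsDyckPath n w) :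
    ∃ M, w = true :: M ++ [false] := by
  obtain ⟨hL, hct, hok⟩ := hD
  cases w with
  | nil =>
    exfalso
    simp at hL
    omega
  | cons a Q =>
    have ha : a = true := by
      cases a
      · exfalso
        have h1 := hok 1
        simp [List.count_cons] at h1
      · rfl
    subst ha
    have hQ : Q ≠ [] := by
      intro h
      subst h
      simp at hL
      omega
    obtain ⟨M, b, hMb⟩ : ∃ M b, Q = M ++ [b] :=
      ⟨Q.dropLast, Q.getLast hQ, (List.dropLast_append_getLast hQ).symm⟩
    subst hMb
    cases b
    · exact ⟨M, rfl⟩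
    · exfalso
      simp only [List.length_cons, List.length_append, List.length_singleton,
        List.length_nil] at hL
      have hk := hok (2*n - 1)
      have htake : (true :: (M ++ [true])).take (2*n-1) = true :: M := by
        rw [← List.cons_append, List.take_left' (by simp; omega)]
      rw [htake] at hk
      have e1 : (true :: (M ++ [true])).count true = n := hct
      have e2 := count_tf M
      simp [List.count_cons, List.count_append] at e1 hk
      omega

lemma surjA {n : ℕ} (hn : 1 ≤ n) {w : List Bool} (hD : IsDyckPath n w) (ho : AllPeaksOdd w) :
    ∃ l, IsMotzkin (n-1) l ∧ encA l = w := by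
  obtain ⟨M, rfl⟩ := shapeA hn hD
  have hL := hD.1
  have hct := hD.2.1
  simp only [List.length_cons, List.length_append, List.length_singleton,
    List.length_nil] at hL
  have hnp : ∀ j, ¬(M[2*j]? = some true ∧ M[2*j+1]? = some false) := by
    rintro j ⟨m1, m2⟩
    have hjlt : 2*j+1 < M.length := getElem?_lt m2
    have p1 : (true :: (M ++ [false]))[2*j+1]? = some true := by
      rw [List.getElem?_cons_succ, List.getElem?_append_left (by omega)]
      exact m1
    have p2 : (true :: (M ++ [false]))[2*j+1+1]? = some false := by
      rw [show (2*j+1+1 : ℕ) = (2*j+1)+1 from rfl, List.getElem?_cons_succ,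
        List.getElem?_append_left hjlt]
      exact m2
    have h := ho (2*j+1) ⟨p1, p2⟩
    rw [(peak_parity hD ⟨p1, p2⟩).1] at h
    omega
  have hM : enc (dec M) = M := enc_dec M.length M le_rfl (by omega) hnp
  set l := dec M with hl
  have hll : l.length = n - 1 := by
    have := enc_length l
    rw [hM] at this
    omega
  have hct2 : (true :: M ++ [false]).count true = M.count true + 1 := by
    simp [List.count_cons, List.count_append]
  have hcte := count_true_enc l
  rw [hM, hll] at hcte
  have hsum : msum l = 0 := by omega
  have hok : ok 0 (encA l) := by
    unfold encA
    rw [hM]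
    exact (dyck_iff.mp hD).2.2
  rw [ok_encA hsum, Rlist_iff] at hok
  refine ⟨l, ⟨hll, hsum, fun k => by have := hok.1 k; omega⟩, ?_⟩
  show true :: (enc l ++ [false]) = true :: M ++ [false]
  rw [hM, List.cons_append]

lemma surjB {n : ℕ} {w : List Bool} (hD : IsDyckPath n w) (he : AllPeaksEven w) :
    ∃ l, IsRiordan n l ∧ enc l = w := by
  have hnp : ∀ j, ¬(w[2*j]? = some true ∧ w[2*j+1]? = some false) := by
    rintro j ⟨m1, m2⟩
    have h := he (2*j) ⟨m1, m2⟩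
    rw [(peak_parity hD ⟨m1, m2⟩).2] at h
    omega
  have hM : enc (dec w) = w := enc_dec w.length w le_rfl (by rw [hD.1]; omega) hnp
  set l := dec w with hl
  have hll : l.length = n := by
    have := enc_length l
    rw [hM, hD.1] at this
    omega
  have hcte := count_true_enc l
  rw [hM, hD.2.1, hll] at hcte
  have hsum : msum l = 0 := by omega
  have hok : ok 0 (enc l) := by
    rw [hM]
    exact (dyck_iff.mp hD).2.2
  rw [ok_enc, Rlist_iff] at hok
  exact ⟨l, ⟨⟨hll, hsum, fun k => by have := hok.1 k; omega⟩,
    fun i hi => by have := hok.2 i hi; omega⟩, hM⟩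

lemma cardA {n : ℕ} (hn : 1 ≤ n) :
    Nat.card {P : List Bool // IsDyckPath n P ∧ AllPeaksOdd P} =
      Nat.card {l : List MStep // IsMotzkin (n-1) l} := by
  symm
  apply Nat.card_eq_of_bijective (fun l => ⟨encA l.1, memA hn l.2⟩)
  constructor
  · rintro ⟨l1, h1⟩ ⟨l2, h2⟩ h
    simp only [Subtype.mk.injEq, encA, List.cons.injEq, true_and] at h
    exact Subtype.ext (enc_injective (List.append_cancel_right h))
  · rintro ⟨w, hD, ho⟩
    obtain ⟨l, hm, he⟩ := surjA hn hD ho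
    exact ⟨⟨l, hm⟩, Subtype.ext he⟩

lemma cardB (n : ℕ) :
    Nat.card {P : List Bool // IsDyckPath n P ∧ AllPeaksEven P} =
      Nat.card {l : List MStep // IsRiordan n l} := by
  symm
  apply Nat.card_eq_of_bijective (fun l => ⟨enc l.1, memB l.2⟩)
  constructor
  · rintro ⟨l1, h1⟩ ⟨l2, h2⟩ h
    simp only [Subtype.mk.injEq] at h
    exact Subtype.ext (enc_injective h)
  · rintro ⟨w, hD, he⟩
    obtain ⟨l, hm, hw⟩ := surjB hD he
    exact ⟨⟨l, hm⟩, Subtype.ext hw⟩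

lemma card0odd :
    Nat.card {P : List Bool // IsDyckPath 0 P ∧ AllPeaksOdd P} =
      Nat.card {l : List MStep // IsMotzkin 0 l} := by
  have h1 : Nat.card {P : List Bool // IsDyckPath 0 P ∧ AllPeaksOdd P} = 1 := by
    rw [Nat.card_eq_one_iff_unique]
    constructor
    · constructor
      rintro ⟨P, hP, -⟩ ⟨Q, hQ, -⟩
      have hP0 : P = [] := List.eq_nil_of_length_eq_zero (by simpa using hP.1)
      have hQ0 : Q = [] := List.eq_nil_of_length_eq_zero (by simpa using hQ.1)
      simp [Subtype.ext_iff, hP0, hQ0]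
    · exact ⟨⟨[], ⟨rfl, rfl, fun k => by simp⟩, fun i hp => by simp [IsPeak] at hp⟩⟩
  have h2 : Nat.card {l : List MStep // IsMotzkin 0 l} = 1 := by
    rw [Nat.card_eq_one_iff_unique]
    constructor
    · constructor
      rintro ⟨P, hP⟩ ⟨Q, hQ⟩
      have hP0 : P = [] := List.eq_nil_of_length_eq_zero hP.1
      have hQ0 : Q = [] := List.eq_nil_of_length_eq_zero hQ.1
      simp [Subtype.ext_iff, hP0, hQ0]
    · exact ⟨⟨[], rfl, rfl, fun k => by simp⟩⟩
  rw [h1, h2]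

end OEPCaux

/-- Dyck paths of size `n` with all peaks at odd height are counted by the Motzkin number
`m_{n-1}` and those with all peaks at even height by the Riordan number `r_n`
(both defined here as path counts). -/
theorem odd_even_peak_counts (n : ℕ) :
    Nat.card {P : List Bool // IsDyckPath n P ∧ AllPeaksOdd P} =
      Nat.card {l : List MStep // IsMotzkin (n - 1) l} ∧
    Nat.card {P : List Bool // IsDyckPath n P ∧ AllPeaksEven P} =
      Nat.card {l : List MStep // IsRiordan n l} := by
  constructor
  · rcases Nat.eq_zero_or_pos n with rfl | hn
    · exact OEPCaux.card0odd
    · exact OEPCaux.cardA hn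
  · exact OEPCaux.cardB n
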